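/- (Theorem 1, Carlyle–Paz / Fliess.) Let Σ be a finite alphabet and f : List Σ → ℝ. Then f can be computed by a weighted automaton (with some finite number of states) if and only if the Hankel rank of f is finite; and in that case, writing r for the Hankel rank, every weighted automaton computing f has at least r states and there exists a weighted automaton with exactly r states computing f, so r equals the minimal number of states of any WA computing f. -/

import Mathlib

open Matrix

private theorem wa_rank_le {A : Type*} (f : List A → ℝ) {n : ℕ}
    (α0 αinf : Fin n → ℝ) (M : A → Matrix (Fin n) (Fin n) ℝ)
    (h : ∀ w : List A, f w = α0 ⬝ᵥ ((w.map M).prod).mulVec αinf) :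
    Module.rank ℝ
      ↥(Submodule.span ℝ
          {g : List A → ℝ | ∃ u : List A, g = fun v : List A => f (u ++ v)}) ≤ n := by
  classical
  let T : (Fin n → ℝ) →ₗ[ℝ] (List A → ℝ) :=
    { toFun := fun x => fun v => x ⬝ᵥ ((v.map M).prod).mulVec αinf
      map_add' := by intro x y; funext v; simp [add_dotProduct]
      map_smul' := by intro c x; funext v; simp [smul_dotProduct] }
  have hle : Submodule.span ℝ
      {g : List A → ℝ | ∃ u : List A, g = fun v : List A => f (u ++ v)} ≤
      LinearMap.range T := by
    rw [Submodule.span_le]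
    rintro g ⟨u, rfl⟩
    refine ⟨α0 ᵥ* ((u.map M).prod), ?_⟩
    funext v
    simp only [T, LinearMap.coe_mk, AddHom.coe_mk]
    simp only [h (u ++ v), List.map_append, List.prod_append, dotProduct_mulVec,
      vecMul_vecMul]
  have h2 := lift_rank_range_le T
  rw [rank_fin_fun] at h2
  have h3 : Module.rank ℝ (LinearMap.range T) ≤ (n : Cardinal) := by
    simpa using h2
  exact le_trans (Submodule.rank_mono hle) h3

set_option maxHeartbeats 1000000 in
set_option synthInstance.maxHeartbeats 400000 in
private theorem wa_exists {A : Type*} (f : List A → ℝ) {r : ℕ}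
    (h : Module.rank ℝ
      ↥(Submodule.span ℝ
          {g : List A → ℝ | ∃ u : List A, g = fun v : List A => f (u ++ v)}) = r) :
    ∃ (α0 αinf : Fin r → ℝ) (M : A → Matrix (Fin r) (Fin r) ℝ),
      ∀ w : List A, f w = α0 ⬝ᵥ ((w.map M).prod).mulVec αinf := by
  classical
  set V := Submodule.span ℝ
      {g : List A → ℝ | ∃ u : List A, g = fun v : List A => f (u ++ v)} with hV
  haveI : Module.Finite ℝ V := by
    rw [← Module.rank_lt_aleph0_iff, h]; exact Cardinal.nat_lt_aleph0 r
  have hfr : Module.finrank ℝ V = r := Module.finrank_eq_of_rank_eq h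
  let b : Module.Basis (Fin r) ℝ V := Module.finBasisOfFinrankEq ℝ V hfr
  -- shift operators
  have hmap : ∀ a : A, ∀ x ∈ V, (LinearMap.funLeft ℝ ℝ (List.cons a)) x ∈ V := by
    intro a x hx
    have : Submodule.map (LinearMap.funLeft ℝ ℝ (List.cons a)) V ≤ V := by
      rw [hV, Submodule.map_span, Submodule.span_le]
      rintro g ⟨g', ⟨u, rfl⟩, rfl⟩
      refine Submodule.subset_span ⟨u ++ [a], ?_⟩
      funext v
      simp [LinearMap.funLeft, List.append_assoc]
    exact this ⟨x, hx, rfl⟩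
  let T : A → V →ₗ[ℝ] V := fun a =>
    (LinearMap.funLeft ℝ ℝ (List.cons a)).restrict (hmap a)
  let M : A → Matrix (Fin r) (Fin r) ℝ := fun a => (LinearMap.toMatrix b b (T a))ᵀ
  have key : ∀ (a : A) (v : V), b.repr (T a v) = (b.repr v) ᵥ* (M a) := by
    intro a v
    rw [show (M a) = (LinearMap.toMatrix b b (T a))ᵀ from rfl, vecMul_transpose,
      LinearMap.toMatrix_mulVec_repr]
  have hcoeT : ∀ (a : A) (v : V), ((T a v : V) : List A → ℝ) = fun x => (v : List A → ℝ) (a :: x) := by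
    intro a v; rfl
  have lem1 : ∀ (w : List A) (v : V),
      ((w.foldl (fun x a => T a x) v : V) : List A → ℝ) = fun x => (v : List A → ℝ) (w ++ x) := by
    intro w
    induction w with
    | nil => intro v; simp
    | cons a t ih =>
      intro v
      rw [List.foldl_cons, ih (T a v), hcoeT]
      simp
  have lem2 : ∀ (w : List A) (v : V),
      b.repr (w.foldl (fun x a => T a x) v) = (b.repr v) ᵥ* ((w.map M).prod) := by
    intro w
    induction w with
    | nil => intro v; simp
    | cons a t ih =>
      intro v
      rw [List.foldl_cons, ih (T a v), key, List.map_cons, List.prod_cons, vecMul_vecMul]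
  have hfV : f ∈ V := by
    refine Submodule.subset_span ⟨[], ?_⟩
    funext v; simp
  set fv : V := ⟨f, hfV⟩ with hfv
  let αinf : Fin r → ℝ := fun i => ((b i : V) : List A → ℝ) []
  have heval : ∀ v : V, ((v : V) : List A → ℝ) [] = (b.repr v) ⬝ᵥ αinf := by
    intro v
    let ε : V →ₗ[ℝ] ℝ := (LinearMap.proj ([] : List A)).comp V.subtype
    have hε : ∀ x : V, ε x = ((x : V) : List A → ℝ) [] := fun _ => rfl
    rw [← hε v]
    conv_lhs => rw [← b.sum_repr v]
    rw [map_sum]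
    simp only [_root_.map_smul, smul_eq_mul, dotProduct]
    rfl
  refine ⟨b.repr fv, αinf, M, fun w => ?_⟩
  have h1 : f w = ((w.foldl (fun x a => T a x) fv : V) : List A → ℝ) [] := by
    rw [lem1 w fv]; simp [hfv]
  rw [h1, heval, lem2, ← dotProduct_mulVec]

theorem wa_iff_finite_hankel_rank {A : Type*} [Fintype A] (f : List A → ℝ) :
    ((∃ (n : ℕ) (α0 αinf : Fin n → ℝ) (M : A → Matrix (Fin n) (Fin n) ℝ),
        ∀ w : List A, f w = α0 ⬝ᵥ ((w.map M).prod).mulVec αinf) ↔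
      Module.rank ℝ
        ↥(Submodule.span ℝ
            {g : List A → ℝ | ∃ u : List A, g = fun v : List A => f (u ++ v)})
        < Cardinal.aleph0) ∧
    ∀ r : ℕ,
      Module.rank ℝ
        ↥(Submodule.span ℝ
            {g : List A → ℝ | ∃ u : List A, g = fun v : List A => f (u ++ v)}) = r →
      ((∀ (n : ℕ) (α0 αinf : Fin n → ℝ) (M : A → Matrix (Fin n) (Fin n) ℝ),
          (∀ w : List A, f w = α0 ⬝ᵥ ((w.map M).prod).mulVec αinf) → r ≤ n) ∧
       (∃ (α0 αinf : Fin r → ℝ) (M : A → Matrix (Fin r) (Fin r) ℝ),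
          ∀ w : List A, f w = α0 ⬝ᵥ ((w.map M).prod).mulVec αinf)) := by
  constructor
  · constructor
    · rintro ⟨n, α0, αinf, M, hM⟩
      exact lt_of_le_of_lt (wa_rank_le f α0 αinf M hM) (Cardinal.nat_lt_aleph0 n)
    · intro hlt
      obtain ⟨r, hr⟩ := Cardinal.lt_aleph0.mp hlt
      obtain ⟨α0, αinf, M, hM⟩ := wa_exists f hr
      exact ⟨r, α0, αinf, M, hM⟩
  · intro r hr
    constructor
    · intro n α0 αinf M hM
      have := wa_rank_le f α0 αinf M hM
      rw [hr] at this
      exact_mod_cast this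
    · exact wa_exists f hr
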